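/- Let S be a nonempty open subset of ℝ^d and let Q be a bounded positive kernel on S, i.e. Q(x,·) is a nonnegative Borel measure on S for each x, measurable in x, with sup_{x∈S} Q(x,S) < ∞. Assume: (1) there exists N₁ ≥ 1 such that for every k ≥ N₁ the iterate Q^k is strong Feller, i.e. for every bounded Borel function f on S the map x ↦ ∫_S f(y) Q^k(x,dy) is continuous on S; (2) for every x ∈ S and every nonempty open subset O of S there exists q(x,O) ∈ ℕ such that Q^k(x,O) > 0 for all k ≥ q(x,O). Let m ≥ 1 and let μ be a nonzero finite nonnegative Borel measure on S satisfying μQ^m = μ, i.e. μ(A) = ∫_S Q^m(x,A) μ(dx) for every Borel set A ⊆ S. Then μ(O) > 0 for every nonempty open subset O of S. -/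

import Mathlib

open MeasureTheory ProbabilityTheory

/-- Iterates of a kernel: `kernelIter Q k` is `Q^k`, with `Q^0` the identity
(deterministic) kernel and `Q^{k+1}(x, A) = ∫ Q^k(y, A) Q(x, dy)`. -/
noncomputable def kernelIter {α : Type*} [MeasurableSpace α] (Q : Kernel α α) : ℕ → Kernel α α
  | 0 => Kernel.deterministic id measurable_id
  | n + 1 => (kernelIter Q n) ∘ₖ Q

instance kernelIter_isFiniteKernel {α : Type*} [MeasurableSpace α] (Q : Kernel α α)
    [IsFiniteKernel Q] (k : ℕ) : IsFiniteKernel (kernelIter Q k) := by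
  induction k with
  | zero => rw [kernelIter]; infer_instance
  | succ n ih => rw [kernelIter]; infer_instance

lemma kernelIter_add {α : Type*} [MeasurableSpace α] (Q : Kernel α α) [IsFiniteKernel Q]
    (a b : ℕ) : kernelIter Q (a + b) = kernelIter Q a ∘ₖ kernelIter Q b := by
  induction b with
  | zero =>
      simp only [Nat.add_zero]
      rw [show kernelIter Q 0 = Kernel.deterministic id measurable_id from rfl,
        Kernel.comp_deterministic_eq_comap]
      ext x s hs
      simp [Kernel.comap_apply]
  | succ n ih =>
      rw [show a + (n + 1) = (a + n) + 1 from rfl]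
      rw [show kernelIter Q ((a + n) + 1) = kernelIter Q (a + n) ∘ₖ Q from rfl, ih,
        Kernel.comp_assoc]
      rfl

/-- Let `S` be a nonempty open subset of `ℝ^d` and `Q` a bounded positive
kernel on `S`. If some iterate threshold `N₁ ≥ 1` makes all `Q^k`, `k ≥ N₁`, strong Feller,
and if for every `x` and every nonempty open `O ⊆ S` the quantities `Q^k(x, O)` are positive
for all large `k`, then any nonzero finite nonnegative measure `μ` with `μ Q^m = μ`
(`m ≥ 1`) charges every nonempty open subset of `S`. -/
theorem stmt_2 {d : ℕ} (S : Set (EuclideanSpace ℝ (Fin d)))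
    (hSopen : IsOpen S) (hSne : S.Nonempty)
    (Q : Kernel S S) (hQbdd : IsFiniteKernel Q)
    (N₁ : ℕ) (hN₁ : 1 ≤ N₁)
    (hSF : ∀ k, N₁ ≤ k → ∀ f : S → ℝ, Measurable f → (∃ M : ℝ, ∀ y, |f y| ≤ M) →
      Continuous fun x : S => ∫ y, f y ∂(kernelIter Q k x))
    (hirr : ∀ x : S, ∀ O : Set S, IsOpen O → O.Nonempty →
      ∃ q : ℕ, ∀ k, q ≤ k → 0 < kernelIter Q k x O)
    (m : ℕ) (hm : 1 ≤ m)
    (μ : Measure S) (hμfin : IsFiniteMeasure μ) (hμne : μ ≠ 0)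
    (hinv : ∀ A : Set S, MeasurableSet A → μ A = ∫⁻ x, kernelIter Q m x A ∂μ) :
    ∀ O : Set S, IsOpen O → O.Nonempty → 0 < μ O := by
  intro O hO hOne
  -- μ is invariant under all iterates Q^{j*m}
  have hinviter : ∀ j : ℕ, ∀ A : Set S, MeasurableSet A →
      μ A = ∫⁻ x, kernelIter Q (j * m) x A ∂μ := by
    intro j
    induction j with
    | zero =>
        intro A hA
        simp only [Nat.zero_mul]
        rw [show kernelIter Q 0 = Kernel.deterministic id measurable_id from rfl]
        simp only [Kernel.deterministic_apply' measurable_id _ hA, id_eq]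
        exact (lintegral_indicator_one hA).symm
    | succ n ih =>
        intro A hA
        have hcomp : kernelIter Q ((n + 1) * m) = kernelIter Q (n * m) ∘ₖ kernelIter Q m := by
          rw [show (n + 1) * m = n * m + m by ring, kernelIter_add]
        rw [hcomp]
        have hb : μ.bind (kernelIter Q m) = μ := by
          ext B hB
          rw [Measure.bind_apply hB (kernelIter Q m).measurable.aemeasurable]
          exact (hinv B hB).symm
        calc μ A = ∫⁻ y, kernelIter Q (n * m) y A ∂μ := ih A hA
          _ = ∫⁻ y, kernelIter Q (n * m) y A ∂(μ.bind (kernelIter Q m)) := by rw [hb]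
          _ = ∫⁻ x, ∫⁻ y, kernelIter Q (n * m) y A ∂(kernelIter Q m x) ∂μ := by
              rw [Measure.lintegral_bind (kernelIter Q m).measurable.aemeasurable
                (Kernel.measurable_coe _ hA).aemeasurable]
          _ = ∫⁻ x, (kernelIter Q (n * m) ∘ₖ kernelIter Q m) x A ∂μ := by
              refine lintegral_congr fun x => ?_
              rw [Kernel.comp_apply' _ _ _ hA]
  by_contra h
  push_neg at h
  have hμO : μ O = 0 := le_antisymm h zero_le
  -- For each j, Q^{j*m}(·, O) = 0 μ-a.e.
  have hae : ∀ j : ℕ, ∀ᵐ x ∂μ, kernelIter Q (j * m) x O = 0 := by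
    intro j
    have h0 : ∫⁻ x, kernelIter Q (j * m) x O ∂μ = 0 := by
      rw [← hinviter j O hO.measurableSet, hμO]
    exact (lintegral_eq_zero_iff (Kernel.measurable_coe _ hO.measurableSet)).mp h0
  have hall : ∀ᵐ x ∂μ, ∀ j : ℕ, kernelIter Q (j * m) x O = 0 := ae_all_iff.mpr hae
  -- Since μ ≠ 0, there exists such an x
  have : (ae μ).NeBot := ae_neBot.mpr hμne
  obtain ⟨x, hx⟩ := hall.exists
  obtain ⟨q, hq⟩ := hirr x O hO hOne
  have hge : q ≤ (q + 1) * m := by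
    calc q ≤ q + 1 := Nat.le_succ q
      _ = (q + 1) * 1 := (mul_one _).symm
      _ ≤ (q + 1) * m := Nat.mul_le_mul_left _ hm
  have := hq ((q + 1) * m) hge
  rw [hx (q + 1)] at this
  exact lt_irrefl 0 this
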